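/- Let G be a finite multiplicative Lie algebra and H a subalgebra of G. Then H is isoclinic to G if and only if H·𝒵(G) = G. -/

import Mathlib

open scoped commutatorElement

universe u v

/-- A multiplicative Lie algebra: a group with an extra binary operation `⋆`
satisfying the Ellis axioms. -/
class MultLieAlgebra (G : Type u) extends Group G where
  lstar : G → G → G
  lstar_self : ∀ g : G, lstar g g = 1
  lstar_mul_right : ∀ g h h' : G, lstar g (h * h') = lstar g h * (h * lstar g h' * h⁻¹)
  lstar_mul_left : ∀ g g' h : G, lstar (g * g') h = (g * lstar g' h * g⁻¹) * lstar g h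
  lstar_jacobi : ∀ g h k : G,
      lstar (lstar g h) (h * k * h⁻¹) * lstar (lstar h k) (k * g * k⁻¹) *
        lstar (lstar k g) (g * h * g⁻¹) = 1
  conj_lstar : ∀ k g h : G, k * lstar g h * k⁻¹ = lstar (k * g * k⁻¹) (k * h * k⁻¹)

namespace MultLieAlgebra

infixl:72 " ⋆ " => MultLieAlgebra.lstar

variable {G : Type u} [MultLieAlgebra G]

lemma one_lstar (x : G) : (1 : G) ⋆ x = 1 := by
  have h := lstar_mul_left (1 : G) 1 x
  simp only [one_mul, inv_one, mul_one] at h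
  exact (right_eq_mul.mp h)

lemma lstar_one (x : G) : x ⋆ (1 : G) = 1 := by
  have h := lstar_mul_right x (1 : G) 1
  simp only [one_mul, inv_one, mul_one] at h
  exact left_eq_mul.mp h

lemma inv_lstar_of_lstar_eq_one {g : G} (hg : ∀ x : G, g ⋆ x = 1) (y : G) : g⁻¹ ⋆ y = 1 := by
  have h := lstar_mul_left g⁻¹ g y
  simp only [inv_mul_cancel, one_lstar, hg, mul_one, inv_inv] at h
  simpa using h.symm

lemma lstar_inv_of_lstar_eq_one {g : G} (hg : ∀ x : G, x ⋆ g = 1) (y : G) : y ⋆ g⁻¹ = 1 := by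
  have h := lstar_mul_right y g⁻¹ g
  simp only [inv_mul_cancel, lstar_one, hg, mul_one, inv_inv] at h
  simpa using h.symm

/-- The multiplicative commutator ideal `ᴹ[G,G]`, generated by all commutators
`⁅a,b⁆` and all values `a ⋆ b`. -/
def mlCommutator (G : Type u) [MultLieAlgebra G] : Subgroup G :=
  Subgroup.closure {x : G | (∃ a b : G, x = ⁅a, b⁆) ∨ ∃ a b : G, x = a ⋆ b}

lemma commutator_mem_mlCommutator (a b : G) : ⁅a, b⁆ ∈ mlCommutator G :=
  Subgroup.subset_closure (Or.inl ⟨a, b, rfl⟩)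

lemma lstar_mem_mlCommutator (a b : G) : a ⋆ b ∈ mlCommutator G :=
  Subgroup.subset_closure (Or.inr ⟨a, b, rfl⟩)

instance mlCommutator_normal : (mlCommutator G).Normal := by
  constructor
  intro n hn g
  induction hn using Subgroup.closure_induction with
  | mem x hx =>
    rcases hx with ⟨a, b, rfl⟩ | ⟨a, b, rfl⟩
    · have : g * ⁅a, b⁆ * g⁻¹ = ⁅g * a * g⁻¹, g * b * g⁻¹⁆ := by
        simp only [commutatorElement_def]; group
      rw [this]; exact commutator_mem_mlCommutator _ _
    · rw [conj_lstar]; exact lstar_mem_mlCommutator _ _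
  | one => simpa using one_mem (mlCommutator G)
  | mul x y hx hy ihx ihy =>
    have : g * (x * y) * g⁻¹ = (g * x * g⁻¹) * (g * y * g⁻¹) := by group
    rw [this]; exact mul_mem ihx ihy
  | inv x hx ihx =>
    have : g * x⁻¹ * g⁻¹ = (g * x * g⁻¹)⁻¹ := by group
    rw [this]; exact inv_mem ihx

/-- The multiplicative Lie center `𝒵(G) = Z(G) ∩ LZ(G)`. -/
def mlCenter (G : Type u) [MultLieAlgebra G] : Subgroup G where
  carrier := {g : G | (∀ x : G, g * x = x * g) ∧ ∀ x : G, g ⋆ x = 1 ∧ x ⋆ g = 1}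
  one_mem' := ⟨fun x => by simp, fun x => ⟨one_lstar x, lstar_one x⟩⟩
  mul_mem' := by
    rintro a b ⟨ha₁, ha₂⟩ ⟨hb₁, hb₂⟩
    refine ⟨fun x => by rw [mul_assoc, hb₁ x, ← mul_assoc, ha₁ x, mul_assoc], fun x => ?_⟩
    constructor
    · rw [lstar_mul_left, (hb₂ x).1, (ha₂ x).1]; simp
    · rw [lstar_mul_right, (ha₂ x).2, (hb₂ x).2]; simp
  inv_mem' := by
    rintro a ⟨ha₁, ha₂⟩
    refine ⟨fun x => by rw [inv_mul_eq_iff_eq_mul, ← mul_assoc, ha₁ x, mul_assoc,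
      mul_inv_cancel, mul_one], fun x => ?_⟩
    exact ⟨inv_lstar_of_lstar_eq_one (fun y => (ha₂ y).1) x,
      lstar_inv_of_lstar_eq_one (fun y => (ha₂ y).2) x⟩

lemma mem_mlCenter_iff {g : G} :
    g ∈ mlCenter G ↔ (∀ x : G, g * x = x * g) ∧ ∀ x : G, g ⋆ x = 1 ∧ x ⋆ g = 1 :=
  Iff.rfl

instance mlCenter_normal : (mlCenter G).Normal := by
  constructor
  intro n hn g
  have h : g * n * g⁻¹ = n := by rw [← hn.1 g]; group
  rw [h]; exact hn

/-- An isoclinism between two multiplicative Lie algebras. -/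
structure Isoclinism (G : Type u) (H : Type v) [MultLieAlgebra G] [MultLieAlgebra H] where
  lam : (G ⧸ mlCenter G) ≃* (H ⧸ mlCenter H)
  mu : mlCommutator G ≃* mlCommutator H
  map_commutator : ∀ (g g' : G) (h h' : H),
    lam (QuotientGroup.mk g) = QuotientGroup.mk h →
    lam (QuotientGroup.mk g') = QuotientGroup.mk h' →
    (mu ⟨⁅g, g'⁆, commutator_mem_mlCommutator g g'⟩ : H) = ⁅h, h'⁆
  map_lstar : ∀ (g g' : G) (h h' : H),
    lam (QuotientGroup.mk g) = QuotientGroup.mk h →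
    lam (QuotientGroup.mk g') = QuotientGroup.mk h' →
    (mu ⟨g ⋆ g', lstar_mem_mlCommutator g g'⟩ : H) = h ⋆ h'

/-- Two multiplicative Lie algebras are isoclinic if there is an isoclinism between them. -/
def Isoclinic (G : Type u) (H : Type v) [MultLieAlgebra G] [MultLieAlgebra H] : Prop :=
  Nonempty (Isoclinism G H)

/-- Componentwise multiplicative Lie algebra structure on a binary product. -/
instance instProd (G : Type u) (H : Type v) [MultLieAlgebra G] [MultLieAlgebra H] :
    MultLieAlgebra (G × H) where
  lstar a b := (a.1 ⋆ b.1, a.2 ⋆ b.2)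
  lstar_self a := by ext <;> simp [lstar_self]
  lstar_mul_right a b c := by ext <;> simp [lstar_mul_right]
  lstar_mul_left a b c := by ext <;> simp [lstar_mul_left]
  lstar_jacobi a b c := by ext <;> simp [lstar_jacobi]
  conj_lstar k a b := by ext <;> simp [← conj_lstar]

/-- Componentwise multiplicative Lie algebra structure on a Pi type. -/
instance instPi {ι : Type v} (f : ι → Type u) [∀ i, MultLieAlgebra (f i)] :
    MultLieAlgebra (∀ i, f i) where
  lstar a b := fun i => a i ⋆ b i
  lstar_self a := by funext i; simp [lstar_self]
  lstar_mul_right a b c := by funext i; simp [lstar_mul_right]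
  lstar_mul_left a b c := by funext i; simp [lstar_mul_left]
  lstar_jacobi a b c := by funext i; simp [lstar_jacobi]
  conj_lstar k a b := by funext i; simp [← conj_lstar]

/-- The trivial multiplicative Lie algebra structure on the one-element group. -/
instance instPUnit : MultLieAlgebra PUnit.{u+1} where
  lstar _ _ := 1
  lstar_self _ := rfl
  lstar_mul_right _ _ _ := rfl
  lstar_mul_left _ _ _ := rfl
  lstar_jacobi _ _ _ := rfl
  conj_lstar _ _ _ := rfl

/-- A subalgebra of a multiplicative Lie algebra: a subgroup closed under `⋆`. -/
structure MLSubalgebra (G : Type u) [MultLieAlgebra G] extends Subgroup G where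
  lstar_mem' : ∀ {a b : G}, a ∈ carrier → b ∈ carrier → a ⋆ b ∈ carrier

/-- A subalgebra is a multiplicative Lie algebra with the restricted operations. -/
instance instSubalgebra (H : MLSubalgebra G) : MultLieAlgebra H.toSubgroup where
  lstar a b := ⟨(a : G) ⋆ (b : G), H.lstar_mem' a.2 b.2⟩
  lstar_self a := Subtype.ext (lstar_self (a : G))
  lstar_mul_right a b c := Subtype.ext (lstar_mul_right (a : G) b c)
  lstar_mul_left a b c := Subtype.ext (lstar_mul_left (a : G) b c)
  lstar_jacobi a b c := Subtype.ext (lstar_jacobi (a : G) b c)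
  conj_lstar k a b := Subtype.ext (conj_lstar (k : G) a b)

lemma mul_center_lstar {z : G} (hz : z ∈ mlCenter G) (g y : G) : (g * z) ⋆ y = g ⋆ y := by
  rw [lstar_mul_left, (hz.2 y).1]
  simp

lemma lstar_mul_center {z : G} (hz : z ∈ mlCenter G) (g y : G) : y ⋆ (g * z) = y ⋆ g := by
  rw [lstar_mul_right, (hz.2 y).2]
  simp

/-- The subalgebra `H·𝒵(G)` generated by a subalgebra `H` and the multiplicative
Lie center of `G`. -/
def MLSubalgebra.centerJoin (H : MLSubalgebra G) : MLSubalgebra G where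
  carrier := {x : G | ∃ h ∈ H.carrier, ∃ z ∈ mlCenter G, x = h * z}
  one_mem' := ⟨1, H.toSubgroup.one_mem, 1, one_mem _, by simp⟩
  mul_mem' := by
    rintro x y ⟨h, hh, z, hz, rfl⟩ ⟨h', hh', z', hz', rfl⟩
    refine ⟨h * h', H.toSubgroup.mul_mem hh hh', z * z', mul_mem hz hz', ?_⟩
    rw [mul_assoc, ← mul_assoc z h' z', hz.1 h', mul_assoc, ← mul_assoc, ← mul_assoc]
  inv_mem' := by
    rintro x ⟨h, hh, z, hz, rfl⟩
    refine ⟨h⁻¹, H.toSubgroup.inv_mem hh, z⁻¹, inv_mem hz, ?_⟩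
    rw [mul_inv_rev, (inv_mem hz).1 h⁻¹]
  lstar_mem' := by
    rintro x y ⟨h, hh, z, hz, rfl⟩ ⟨h', hh', z', hz', rfl⟩
    exact ⟨h ⋆ h', H.lstar_mem' hh hh', 1, one_mem _, by
      rw [mul_center_lstar hz, lstar_mul_center hz', mul_one]⟩

/-- An ideal of a multiplicative Lie algebra: a normal subgroup `I` with
`g ⋆ i ∈ I` and `i ⋆ g ∈ I` for all `g ∈ G`, `i ∈ I`. -/
structure MLIdeal (G : Type u) [MultLieAlgebra G] extends Subgroup G where
  conj_mem' : ∀ n : G, n ∈ carrier → ∀ g : G, g * n * g⁻¹ ∈ carrier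
  lstar_mem_left' : ∀ (g : G) {i : G}, i ∈ carrier → g ⋆ i ∈ carrier
  lstar_mem_right' : ∀ (g : G) {i : G}, i ∈ carrier → i ⋆ g ∈ carrier

instance MLIdeal.normal (I : MLIdeal G) : I.toSubgroup.Normal := ⟨I.conj_mem'⟩

/-- An ideal is in particular a subalgebra. -/
def MLIdeal.toMLSubalgebra (I : MLIdeal G) : MLSubalgebra G :=
  { I.toSubgroup with lstar_mem' := fun {a _} _ hb => I.lstar_mem_left' a hb }

lemma MLIdeal.lstar_congr (I : MLIdeal G) {a a' b b' : G}
    (ha : a⁻¹ * a' ∈ I.toSubgroup) (hb : b⁻¹ * b' ∈ I.toSubgroup) :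
    (a ⋆ b)⁻¹ * (a' ⋆ b') ∈ I.toSubgroup := by
  obtain ⟨i, hi, rfl⟩ : ∃ i ∈ I.toSubgroup, a' = a * i :=
    ⟨a⁻¹ * a', ha, by group⟩
  obtain ⟨j, hj, rfl⟩ : ∃ j ∈ I.toSubgroup, b' = b * j :=
    ⟨b⁻¹ * b', hb, by group⟩
  have h1 : (a * i) ⋆ (b * j) = (a * (i ⋆ (b * j)) * a⁻¹) * (a ⋆ (b * j)) :=
    lstar_mul_left a i (b * j)
  have h2 : a ⋆ (b * j) = (a ⋆ b) * (b * (a ⋆ j) * b⁻¹) := lstar_mul_right a b j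
  rw [h1, h2]
  have hu : a * (i ⋆ (b * j)) * a⁻¹ ∈ I.toSubgroup :=
    I.conj_mem' _ (I.lstar_mem_right' _ hi) a
  have hv : b * (a ⋆ j) * b⁻¹ ∈ I.toSubgroup :=
    I.conj_mem' _ (I.lstar_mem_left' _ hj) b
  have : (a ⋆ b)⁻¹ * (a * (i ⋆ (b * j)) * a⁻¹ * ((a ⋆ b) * (b * (a ⋆ j) * b⁻¹))) =
      ((a ⋆ b)⁻¹ * (a * (i ⋆ (b * j)) * a⁻¹) * (a ⋆ b)) * (b * (a ⋆ j) * b⁻¹) := by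
    group
  rw [this]
  exact mul_mem (Subgroup.Normal.conj_mem' I.normal _ hu _) hv

/-- The quotient of a multiplicative Lie algebra by an ideal. -/
instance instQuotient (I : MLIdeal G) : MultLieAlgebra (G ⧸ I.toSubgroup) where
  lstar := Quotient.map₂ (· ⋆ ·) (by
    intro a a' ha b b' hb
    have ha' : a⁻¹ * a' ∈ I.toSubgroup := QuotientGroup.leftRel_apply.mp ha
    have hb' : b⁻¹ * b' ∈ I.toSubgroup := QuotientGroup.leftRel_apply.mp hb
    exact QuotientGroup.leftRel_apply.mpr (I.lstar_congr ha' hb'))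
  lstar_self x := Quotient.inductionOn x fun a => congrArg QuotientGroup.mk (lstar_self a)
  lstar_mul_right x y z := Quotient.inductionOn₃ x y z fun a b c =>
    congrArg QuotientGroup.mk (lstar_mul_right a b c)
  lstar_mul_left x y z := Quotient.inductionOn₃ x y z fun a b c =>
    congrArg QuotientGroup.mk (lstar_mul_left a b c)
  lstar_jacobi x y z := Quotient.inductionOn₃ x y z fun a b c =>
    congrArg QuotientGroup.mk (lstar_jacobi a b c)
  conj_lstar x y z := Quotient.inductionOn₃ x y z fun a b c =>
    congrArg QuotientGroup.mk (conj_lstar a b c)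

lemma quot_lstar (I : MLIdeal G) (a b : G) :
    (QuotientGroup.mk (a ⋆ b) : G ⧸ I.toSubgroup) = QuotientGroup.mk a ⋆ QuotientGroup.mk b :=
  rfl

/-- The ideal `I ∩ ᴹ[G,G]`. -/
def MLIdeal.infCommutator (I : MLIdeal G) : MLIdeal G where
  carrier := {x : G | x ∈ I.toSubgroup ∧ x ∈ mlCommutator G}
  one_mem' := ⟨one_mem _, one_mem _⟩
  mul_mem' := fun ha hb => ⟨mul_mem ha.1 hb.1, mul_mem ha.2 hb.2⟩
  inv_mem' := fun ha => ⟨inv_mem ha.1, inv_mem ha.2⟩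
  conj_mem' := fun n hn g =>
    ⟨I.conj_mem' n hn.1 g, Subgroup.Normal.conj_mem mlCommutator_normal n hn.2 g⟩
  lstar_mem_left' := by
    intro g i hi
    exact ⟨I.lstar_mem_left' g hi.1, lstar_mem_mlCommutator _ _⟩
  lstar_mem_right' := by
    intro g i hi
    exact ⟨I.lstar_mem_right' g hi.1, lstar_mem_mlCommutator _ _⟩

/-- A multiplicative Lie algebra isomorphism is a group isomorphism preserving `⋆`. -/
def IsMLAEquiv {G : Type u} {H : Type v} [MultLieAlgebra G] [MultLieAlgebra H]
    (e : G ≃* H) : Prop :=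
  ∀ a b : G, e (a ⋆ b) = e a ⋆ e b

/-- A witness that `G` and `H` arise as quotients of a common multiplicative Lie
algebra `K` by ideals `ZG`, `ZH`, with `G ∼ K ∼ H` (Theorem on common ancestors). -/
structure CommonQuotientWitness (G : Type u) (H : Type u)
    [MultLieAlgebra G] [MultLieAlgebra H] where
  K : Type u
  [instK : MultLieAlgebra K]
  ZG : MLIdeal K
  ZH : MLIdeal K
  isoG : G ≃* (K ⧸ ZH.toSubgroup)
  isoG_lstar : IsMLAEquiv isoG
  isoH : H ≃* (K ⧸ ZG.toSubgroup)
  isoH_lstar : IsMLAEquiv isoH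
  isoclinicGK : Isoclinic G K
  isoclinicKH : Isoclinic K H

/-- A witness that `G` and `H` embed as ideals of a common multiplicative Lie algebra
`K̃`, each isoclinic to `K̃` (common isoclinic descendant). -/
structure CommonIdealWitness (G : Type u) (H : Type u)
    [MultLieAlgebra G] [MultLieAlgebra H] where
  K : Type u
  [instK : MultLieAlgebra K]
  KG : MLIdeal K
  KH : MLIdeal K
  isoG : G ≃* KG.toMLSubalgebra.toSubgroup
  isoG_lstar : IsMLAEquiv isoG
  isoH : H ≃* KH.toMLSubalgebra.toSubgroup
  isoH_lstar : IsMLAEquiv isoH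
  isoclinicG : Isoclinic (KG.toMLSubalgebra.toSubgroup) K
  isoclinicH : Isoclinic (KH.toMLSubalgebra.toSubgroup) K

/-- A witness of a stem multiplicative Lie algebra isoclinic to `G`. -/
structure StemWitness (G : Type u) [MultLieAlgebra G] where
  H : Type u
  [instH : MultLieAlgebra H]
  stem : mlCenter H ≤ mlCommutator H
  isoclinic : Isoclinic G H


section Statement10

variable {G : Type u} [MultLieAlgebra G] {H : MLSubalgebra G}

lemma coe_subalgebra_lstar (a b : H.toSubgroup) :
    ((a ⋆ b : H.toSubgroup) : G) = (a : G) ⋆ (b : G) := rfl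

lemma mem_mlCenter_of_coe_mem {h : H.toSubgroup} (hh : (h : G) ∈ mlCenter G) :
    h ∈ mlCenter ↥H.toSubgroup := by
  refine ⟨fun x => Subtype.ext (hh.1 (x : G)), fun x =>
    ⟨Subtype.ext ((hh.2 (x : G)).1), Subtype.ext ((hh.2 (x : G)).2)⟩⟩

lemma commutator_mul_center_left {z : G} (hz : z ∈ mlCenter G) (a b : G) :
    ⁅a * z, b⁆ = ⁅a, b⁆ := by
  have h1 : a * z * b * (a * z)⁻¹ * b⁻¹ = a * (z * b * z⁻¹) * a⁻¹ * b⁻¹ := by group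
  have h2 : z * b * z⁻¹ = b := by rw [hz.1 b]; group
  simp only [commutatorElement_def, h1, h2]

lemma commutator_mul_center_right {z : G} (hz : z ∈ mlCenter G) (a b : G) :
    ⁅a, b * z⁆ = ⁅a, b⁆ := by
  have h1 : a * (b * z) * a⁻¹ * (b * z)⁻¹ = a * b * (z * a⁻¹ * z⁻¹) * b⁻¹ := by group
  have h2 : z * a⁻¹ * z⁻¹ = a⁻¹ := by rw [hz.1 a⁻¹]; group
  simp only [commutatorElement_def, h1, h2]

lemma coe_subalgebra_commutator (a b : H.toSubgroup) :
    ((⁅a, b⁆ : H.toSubgroup) : G) = ⁅(a : G), (b : G)⁆ := rfl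

lemma coe_mem_mlCommutator {x : H.toSubgroup} (hx : x ∈ mlCommutator ↥H.toSubgroup) :
    (x : G) ∈ mlCommutator G := by
  induction hx using Subgroup.closure_induction with
  | mem y hy =>
    rcases hy with ⟨a, b, rfl⟩ | ⟨a, b, rfl⟩
    · rw [coe_subalgebra_commutator]; exact commutator_mem_mlCommutator _ _
    · rw [coe_subalgebra_lstar]; exact lstar_mem_mlCommutator _ _
  | one => simpa using one_mem (mlCommutator G)
  | mul x y hx hy ihx ihy => rw [Subgroup.coe_mul]; exact mul_mem ihx ihy
  | inv x hx ihx => rw [Subgroup.coe_inv]; exact inv_mem ihx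

end Statement10

/-- For a finite multiplicative Lie algebra `G` and a subalgebra `H`,
`H ∼ G` iff `H·𝒵(G) = G`. -/
theorem isoclinic_iff_centerJoin_eq_top {G : Type u} [MultLieAlgebra G] [Finite G]
    (H : MLSubalgebra G) :
    Isoclinic ↥H.toSubgroup G ↔ H.centerJoin.toSubgroup = ⊤ := by
  constructor
  · rintro ⟨e⟩
    set J := H.centerJoin.toSubgroup with hJdef
    have hHJ : H.toSubgroup ≤ J := fun h hh => ⟨h, hh, 1, one_mem (mlCenter G), (mul_one h).symm⟩
    have hZJ : mlCenter G ≤ J := fun z hz => ⟨1, H.toSubgroup.one_mem, z, hz, (one_mul z).symm⟩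
    let φ : ↥H.toSubgroup →* ↥J ⧸ (mlCenter G).subgroupOf J :=
      (QuotientGroup.mk' _).comp (Subgroup.inclusion hHJ)
    have hsurj : Function.Surjective φ := by
      rintro q
      obtain ⟨⟨j, hj⟩, rfl⟩ := QuotientGroup.mk_surjective q
      obtain ⟨h, hh, z, hz, rfl⟩ := hj
      refine ⟨⟨h, hh⟩, ?_⟩
      show QuotientGroup.mk _ = QuotientGroup.mk _
      refine QuotientGroup.eq.mpr ?_
      rw [Subgroup.mem_subgroupOf]
      show (h : G)⁻¹ * (h * z) ∈ mlCenter G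
      rw [inv_mul_cancel_left]
      exact hz
    have hker : φ.ker ≤ mlCenter ↥H.toSubgroup := by
      intro x hx
      rw [MonoidHom.mem_ker] at hx
      have hx' : Subgroup.inclusion hHJ x ∈ (mlCenter G).subgroupOf J :=
        (QuotientGroup.eq_one_iff _).mp hx
      exact mem_mlCenter_of_coe_mem (Subgroup.mem_subgroupOf.mp hx')
    have e1 : Nat.card (↥H.toSubgroup ⧸ φ.ker) = Nat.card (↥J ⧸ (mlCenter G).subgroupOf J) :=
      Nat.card_congr (QuotientGroup.quotientKerEquivOfSurjective φ hsurj).toEquiv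
    have e2 : Nat.card (↥H.toSubgroup ⧸ mlCenter ↥H.toSubgroup)
        ≤ Nat.card (↥H.toSubgroup ⧸ φ.ker) := by
      refine Nat.card_le_card_of_surjective
        (QuotientGroup.map φ.ker (mlCenter ↥H.toSubgroup) (MonoidHom.id _) hker) ?_
      intro q
      obtain ⟨x, rfl⟩ := QuotientGroup.mk_surjective q
      exact ⟨QuotientGroup.mk x, rfl⟩
    have e3 : Nat.card (G ⧸ mlCenter G)
        = Nat.card (↥H.toSubgroup ⧸ mlCenter ↥H.toSubgroup) :=
      (Nat.card_congr e.lam.toEquiv).symm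
    have e4 : Nat.card ↥((mlCenter G).subgroupOf J) = Nat.card ↥(mlCenter G) :=
      Nat.card_congr (Subgroup.subgroupOfEquivOfLe hZJ).toEquiv
    have hcard : Nat.card G ≤ Nat.card ↥J := by
      calc Nat.card G = Nat.card (G ⧸ mlCenter G) * Nat.card ↥(mlCenter G) :=
            Subgroup.card_eq_card_quotient_mul_card_subgroup _
        _ ≤ Nat.card (↥J ⧸ (mlCenter G).subgroupOf J) * Nat.card ↥((mlCenter G).subgroupOf J) := by
            rw [e4]
            exact Nat.mul_le_mul_right _ (e3 ▸ (e1 ▸ e2))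
        _ = Nat.card ↥J := (Subgroup.card_eq_card_quotient_mul_card_subgroup _).symm
    exact Subgroup.eq_top_of_le_card J hcard
  · intro hJ
    have hdecomp : ∀ g : G, ∃ h ∈ H.toSubgroup, ∃ z ∈ mlCenter G, g = h * z := by
      intro g
      have : g ∈ H.centerJoin.toSubgroup := hJ ▸ Subgroup.mem_top g
      exact this
    have hcenter : ∀ h : ↥H.toSubgroup, h ∈ mlCenter ↥H.toSubgroup → (h : G) ∈ mlCenter G := by
      intro h hh
      constructor
      · intro g
        obtain ⟨h', hh', z, hz, rfl⟩ := hdecomp g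
        have hc : (h : G) * h' = h' * (h : G) := congrArg Subtype.val (hh.1 ⟨h', hh'⟩)
        calc (h : G) * (h' * z) = (h : G) * h' * z := by rw [mul_assoc]
          _ = h' * (h : G) * z := by rw [hc]
          _ = h' * ((h : G) * z) := by rw [mul_assoc]
          _ = h' * (z * (h : G)) := by rw [hz.1]
          _ = h' * z * (h : G) := by rw [mul_assoc]
      · intro g
        obtain ⟨h', hh', z, hz, rfl⟩ := hdecomp g
        constructor
        · rw [lstar_mul_center hz]
          exact congrArg Subtype.val ((hh.2 ⟨h', hh'⟩).1)
        · rw [mul_center_lstar hz]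
          exact congrArg Subtype.val ((hh.2 ⟨h', hh'⟩).2)
    let φG : ↥H.toSubgroup →* G ⧸ mlCenter G :=
      (QuotientGroup.mk' (mlCenter G)).comp H.toSubgroup.subtype
    have hφsurj : Function.Surjective φG := by
      intro q
      obtain ⟨g, rfl⟩ := QuotientGroup.mk_surjective q
      obtain ⟨h, hh, z, hz, rfl⟩ := hdecomp g
      refine ⟨⟨h, hh⟩, ?_⟩
      show QuotientGroup.mk _ = QuotientGroup.mk _
      refine QuotientGroup.eq.mpr ?_
      show (h : G)⁻¹ * (h * z) ∈ mlCenter G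
      rw [inv_mul_cancel_left]
      exact hz
    have hker : φG.ker = mlCenter ↥H.toSubgroup := by
      ext x
      rw [MonoidHom.mem_ker]
      constructor
      · intro hx
        exact mem_mlCenter_of_coe_mem ((QuotientGroup.eq_one_iff _).mp hx)
      · intro hx
        exact (QuotientGroup.eq_one_iff _).mpr (hcenter x hx)
    let lam : (↥H.toSubgroup ⧸ mlCenter ↥H.toSubgroup) ≃* (G ⧸ mlCenter G) :=
      (QuotientGroup.quotientMulEquivOfEq hker.symm).trans
        (QuotientGroup.quotientKerEquivOfSurjective φG hφsurj)
    have hlam : ∀ x : ↥H.toSubgroup,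
        lam (QuotientGroup.mk x) = QuotientGroup.mk (x : G) := by
      intro x
      show (QuotientGroup.quotientKerEquivOfSurjective φG hφsurj)
        ((QuotientGroup.quotientMulEquivOfEq hker.symm) (QuotientGroup.mk x))
          = QuotientGroup.mk (x : G)
      rw [QuotientGroup.quotientMulEquivOfEq_mk]
      exact QuotientGroup.kerLift_mk φG x
    have hsurjset : ∀ g ∈ mlCommutator G,
        ∃ x : ↥H.toSubgroup, x ∈ mlCommutator ↥H.toSubgroup ∧ (x : G) = g := by
      intro g hg
      induction hg using Subgroup.closure_induction with
      | mem y hy =>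
        rcases hy with ⟨a, b, rfl⟩ | ⟨a, b, rfl⟩
        · obtain ⟨h, hh, z, hz, rfl⟩ := hdecomp a
          obtain ⟨h', hh', z', hz', rfl⟩ := hdecomp b
          refine ⟨⁅(⟨h, hh⟩ : ↥H.toSubgroup), (⟨h', hh'⟩ : ↥H.toSubgroup)⁆,
            commutator_mem_mlCommutator _ _, ?_⟩
          rw [coe_subalgebra_commutator, commutator_mul_center_left hz,
            commutator_mul_center_right hz']
        · obtain ⟨h, hh, z, hz, rfl⟩ := hdecomp a
          obtain ⟨h', hh', z', hz', rfl⟩ := hdecomp b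
          refine ⟨(⟨h, hh⟩ : ↥H.toSubgroup) ⋆ (⟨h', hh'⟩ : ↥H.toSubgroup),
            lstar_mem_mlCommutator _ _, ?_⟩
          rw [coe_subalgebra_lstar, mul_center_lstar hz, lstar_mul_center hz']
      | one => exact ⟨1, one_mem _, rfl⟩
      | mul x y hx hy ihx ihy =>
        obtain ⟨a, ha, rfl⟩ := ihx
        obtain ⟨b, hb, rfl⟩ := ihy
        exact ⟨a * b, mul_mem ha hb, rfl⟩
      | inv x hx ihx =>
        obtain ⟨a, ha, rfl⟩ := ihx
        exact ⟨a⁻¹, inv_mem ha, rfl⟩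
    let ν : ↥(mlCommutator ↥H.toSubgroup) →* ↥(mlCommutator G) :=
      ((H.toSubgroup.subtype).comp (mlCommutator ↥H.toSubgroup).subtype).codRestrict _
        (fun x => coe_mem_mlCommutator x.2)
    have hinj : Function.Injective ν := by
      intro a b hab
      have h1 : ((ν a : ↥(mlCommutator G)) : G) = ((ν b : ↥(mlCommutator G)) : G) :=
        congrArg Subtype.val hab
      exact Subtype.ext (Subtype.ext h1)
    have hnsurj : Function.Surjective ν := by
      rintro ⟨g, hg⟩
      obtain ⟨x, hx, hxg⟩ := hsurjset g hg
      exact ⟨⟨x, hx⟩, Subtype.ext hxg⟩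
    have hcoe : ∀ (x : ↥H.toSubgroup) (hx : x ∈ mlCommutator ↥H.toSubgroup),
        ((MulEquiv.ofBijective ν ⟨hinj, hnsurj⟩ ⟨x, hx⟩ : ↥(mlCommutator G)) : G)
          = (x : G) := fun _ _ => rfl
    refine ⟨⟨lam, MulEquiv.ofBijective ν ⟨hinj, hnsurj⟩, ?_, ?_⟩⟩
    · intro g g' h h' h1 h2
      rw [hlam] at h1 h2
      have hz : (g : G)⁻¹ * h ∈ mlCenter G := QuotientGroup.eq.mp h1
      have hz' : (g' : G)⁻¹ * h' ∈ mlCenter G := QuotientGroup.eq.mp h2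
      have hh : h = (g : G) * ((g : G)⁻¹ * h) := by group
      have hh' : h' = (g' : G) * ((g' : G)⁻¹ * h') := by group
      rw [hcoe, coe_subalgebra_commutator, hh, hh',
        commutator_mul_center_left hz, commutator_mul_center_right hz']
    · intro g g' h h' h1 h2
      rw [hlam] at h1 h2
      have hz : (g : G)⁻¹ * h ∈ mlCenter G := QuotientGroup.eq.mp h1
      have hz' : (g' : G)⁻¹ * h' ∈ mlCenter G := QuotientGroup.eq.mp h2
      have hh : h = (g : G) * ((g : G)⁻¹ * h) := by group
      have hh' : h' = (g' : G) * ((g' : G)⁻¹ * h') := by group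
      rw [hcoe, coe_subalgebra_lstar, hh, hh',
        mul_center_lstar hz, lstar_mul_center hz']

end MultLieAlgebra
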